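/- Let r > 0. If p, q are relatively prime positive integers with p² + q² > 1/(4r²), then there exists a ∈ (0,1) (namely a = 1/(2p)) such that the open r-neighborhood of the orbit of γ(a, p/q) contains the unit square [0,1]². -/

import Mathlib

open Set

/-- The folding map on one coordinate. -/
noncomputable def fold (t : ℝ) : ℝ := if Even ⌊t⌋ then Int.fract t else 1 - Int.fract t

lemma fold_eq_abs (t : ℝ) : fold t = |t - 2 * round (t/2)| := by
  unfold fold
  obtain ⟨m, hm⟩ | hodd := (Int.even_or_odd ⌊t⌋)
  · have heven : Even ⌊t⌋ := ⟨m, hm⟩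
    rw [if_pos heven]
    have hfl : ⌊t⌋ = 2*m := by omega
    have h1 : (2*m : ℝ) ≤ t := by exact_mod_cast (by rw [← hfl]; exact_mod_cast Int.floor_le t)
    have h2 : t < 2*m + 1 := by
      have := Int.lt_floor_add_one t
      rw [hfl] at this; push_cast at this; linarith
    have hround : round (t/2) = m := by
      rw [round_eq, Int.floor_eq_iff]
      constructor <;> [push_cast; push_cast] <;> linarith
    rw [hround, Int.fract, hfl]
    push_cast
    rw [abs_of_nonneg (by linarith)]
  · obtain ⟨m, hm⟩ := hodd
    have hne : ¬ Even ⌊t⌋ := by simp [hm, Int.even_add_one, parity_simps]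
    rw [if_neg hne]
    have h1 : (2*m + 1 : ℝ) ≤ t := by
      have := Int.floor_le t; rw [hm] at this; push_cast at this; linarith
    have h2 : t < 2*m + 2 := by
      have := Int.lt_floor_add_one t; rw [hm] at this; push_cast at this; linarith
    have hround : round (t/2) = m + 1 := by
      rw [round_eq, Int.floor_eq_iff]
      constructor <;> push_cast <;> linarith
    rw [hround, Int.fract, hm]
    push_cast
    rw [abs_of_nonpos (by linarith)]
    ring

lemma fold_le (t : ℝ) (k : ℤ) : fold t ≤ |t - 2 * k| := by
  rw [fold_eq_abs]
  have h := round_le (t/2) k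
  rw [show t - 2 * (round (t/2):ℝ) = 2*(t/2 - round (t/2)) by ring,
     show t - 2 * (k:ℝ) = 2*(t/2 - k) by ring, abs_mul, abs_mul, abs_two]
  linarith

lemma fold_lip (s t : ℝ) : |fold s - fold t| ≤ |s - t| := by
  rw [abs_sub_le_iff]
  constructor
  · have h1 := fold_le s (round (t/2))
    have h2 : |s - 2 * round (t/2)| ≤ |s - t| + |t - 2 * round (t/2)| := by
      calc |s - 2 * round (t/2)| = |(s - t) + (t - 2*round (t/2))| := by ring_nf
        _ ≤ _ := abs_add_le _ _
    rw [fold_eq_abs t]; linarith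
  · have h1 := fold_le t (round (s/2))
    have h2 : |t - 2 * round (s/2)| ≤ |s - t| + |s - 2 * round (s/2)| := by
      calc |t - 2 * round (s/2)| = |(-(s - t)) + (s - 2*round (s/2))| := by ring_nf
        _ ≤  |(-(s-t))| + |s - 2*round (s/2)| := abs_add_le _ _
        _ = _ := by rw [abs_neg]
    rw [fold_eq_abs s]; linarith

lemma fold_eval (u : ℝ) (hu : u ∈ Icc (0:ℝ) 1) (σ : ℝ) (hσ : σ = 1 ∨ σ = -1) (m : ℤ) :
    fold (σ * u + 2 * m) = u := by
  obtain ⟨hu0, hu1⟩ := hu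
  rcases hσ with rfl | rfl
  · rcases eq_or_lt_of_le hu1 with rfl | hlt
    · rw [fold_eq_abs]
      have : round ((1 * 1 + 2*(m:ℝ))/2) = m + 1 := by
        rw [round_eq, Int.floor_eq_iff] <;> push_cast <;> constructor <;> linarith
      rw [this]; push_cast; rw [abs_of_nonpos (by linarith)]; ring
    · rw [fold_eq_abs]
      have : round ((1 * u + 2*(m:ℝ))/2) = m := by
        rw [round_eq, Int.floor_eq_iff] <;> push_cast <;> constructor <;> linarith
      rw [this]; push_cast; rw [abs_of_nonneg (by linarith)]; ring
  · rw [fold_eq_abs]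
    have : round ((-1 * u + 2*(m:ℝ))/2) = m := by
      rw [round_eq, Int.floor_eq_iff] <;> push_cast <;> constructor <;> linarith
    rw [this]; push_cast; rw [abs_of_nonpos (by linarith)]; ring


/-- A point of the Euclidean plane. -/
noncomputable def pt (x y : ℝ) : EuclideanSpace ℝ (Fin 2) := WithLp.toLp 2 ![x, y]

/-- The orbit of the billiard trajectory γ(a, p/q) in the unit square, obtained by folding
the unfolded ray `y = (p/q)(x - a), y ≥ 0` back into the square. -/
noncomputable def billiardOrbit (a : ℝ) (p q : ℕ) : Set (EuclideanSpace ℝ (Fin 2)) :=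
  {z | ∃ x y : ℝ, 0 ≤ y ∧ y = ((p : ℝ) / q) * (x - a) ∧ z = pt (fold x) (fold y)}

/-- The unit square [0,1]² in the Euclidean plane. -/
def unitSquare : Set (EuclideanSpace ℝ (Fin 2)) :=
  {z | z 0 ∈ Icc (0:ℝ) 1 ∧ z 1 ∈ Icc (0:ℝ) 1}

/-- Optimal covering radius of a set: the infimum of r > 0 whose open r-neighborhood
covers the unit square. -/
noncomputable def rcov (S : Set (EuclideanSpace ℝ (Fin 2))) : ℝ :=
  sInf {r : ℝ | 0 < r ∧ unitSquare ⊆ Metric.thickening r S}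

set_option maxHeartbeats 1000000 in
theorem stmt18 (r : ℝ) (hr : 0 < r) (p q : ℕ) (hp : 0 < p) (hq : 0 < q)
    (hpq : Nat.Coprime p q) (hbig : 1 / (4 * r ^ 2) < (p : ℝ) ^ 2 + (q : ℝ) ^ 2) :
    ∃ a ∈ Set.Ioo (0:ℝ) 1, a = 1 / (2 * (p : ℝ)) ∧
      unitSquare ⊆ Metric.thickening r (billiardOrbit a p q) := by
  have hp' : (0:ℝ) < p := by exact_mod_cast hp
  have hq' : (0:ℝ) < q := by exact_mod_cast hq
  have hp1 : (1:ℝ) ≤ p := by exact_mod_cast hp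
  have hq1 : (1:ℝ) ≤ q := by exact_mod_cast hq
  refine ⟨1/(2*(p:ℝ)), ⟨by positivity, ?_⟩, rfl, ?_⟩
  · rw [div_lt_one (by positivity)]; linarith
  intro z hz
  obtain ⟨⟨hu0, hu1⟩, hv0, hv1⟩ := hz
  obtain ⟨u, hu⟩ : ∃ u : ℝ, u = z 0 := ⟨_, rfl⟩
  obtain ⟨v, hv⟩ : ∃ v : ℝ, v = z 1 := ⟨_, rfl⟩
  rw [← hu] at hu0 hu1
  rw [← hv] at hv0 hv1
  obtain ⟨c, hc⟩ : ∃ c : ℝ, c = p*u - q*v := ⟨_, rfl⟩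
  -- choose a sign σ and an integer j with σ*c - 2*j ∈ [0,1]
  obtain ⟨σ, hσ, j, hj1, hj2⟩ : ∃ σ : ℝ, (σ = 1 ∨ σ = -1) ∧
      ∃ j : ℤ, 2*(j:ℝ) ≤ σ*c ∧ σ*c ≤ 2*j+1 := by
    by_cases h : Int.fract (c/2) ≤ 1/2
    · refine ⟨1, Or.inl rfl, ⌊c/2⌋, ?_, ?_⟩
      · have := Int.floor_le (c/2); linarith
      · have hf : Int.fract (c/2) = c/2 - ⌊c/2⌋ := rfl; linarith
    · push_neg at h
      refine ⟨-1, Or.inr rfl, -⌊c/2⌋-1, ?_, ?_⟩ <;>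
      · have hf : Int.fract (c/2) = c/2 - ⌊c/2⌋ := rfl
        have hf1 := Int.fract_lt_one (c/2)
        push_cast
        linarith
  -- Bezout
  obtain ⟨A, B, hAB⟩ : IsCoprime (p:ℤ) (q:ℤ) := by
    rw [Int.isCoprime_iff_gcd_eq_one]; exact_mod_cast hpq
  -- choose m n with p*m - q*n = -j and n ≥ 1
  obtain ⟨N, hN⟩ : ∃ N : ℤ, N = |j * B| + 1 := ⟨_, rfl⟩
  obtain ⟨m, hm⟩ : ∃ m : ℤ, m = -(j*A) + q*N := ⟨_, rfl⟩
  obtain ⟨n, hn⟩ : ∃ n : ℤ, n = j*B + p*N := ⟨_, rfl⟩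
  have hmn : (p:ℤ)*m - q*n = -j := by
    rw [hm, hn]; linear_combination (-j) * hAB
  have hn1 : 1 ≤ n := by
    have h1 : -(|j*B|) ≤ j*B := neg_abs_le _
    have h2 : (1:ℤ) ≤ p := by exact_mod_cast hp
    have h3 : (0:ℤ) ≤ |j*B| := abs_nonneg _
    rw [hn, hN]; nlinarith
  obtain ⟨d, hd⟩ : ∃ d : ℝ, d = σ*c - 2*j - 1/2 := ⟨_, rfl⟩
  have hdlo : -(1/2) ≤ d := by rw [hd]; linarith
  have hdhi : d ≤ 1/2 := by rw [hd]; linarith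
  have hdabs : |d| ≤ 1/2 := abs_le.mpr ⟨hdlo, hdhi⟩
  obtain ⟨S, hS⟩ : ∃ S : ℝ, S = (p:ℝ)^2 + (q:ℝ)^2 := ⟨_, rfl⟩
  have hSpos : 0 < S := by rw [hS]; positivity
  obtain ⟨x₀, hx0⟩ : ∃ x₀ : ℝ, x₀ = σ*u + 2*m := ⟨_, rfl⟩
  obtain ⟨y₀, hy0⟩ : ∃ y₀ : ℝ, y₀ = σ*v + 2*n := ⟨_, rfl⟩
  have hmnR : (p:ℝ)*m - q*n = -(j:ℝ) := by exact_mod_cast hmn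
  have hline0 : (p:ℝ)*x₀ - q*y₀ = d + 1/2 := by
    rw [hx0, hy0, hd, hc]; linear_combination 2 * hmnR
  obtain ⟨X, hX⟩ : ∃ X : ℝ, X = x₀ - d*p/S := ⟨_, rfl⟩
  obtain ⟨Y, hY⟩ : ∃ Y : ℝ, Y = y₀ + d*q/S := ⟨_, rfl⟩
  have hyge : (1:ℝ) ≤ y₀ := by
    have hn1R : (1:ℝ) ≤ n := by exact_mod_cast hn1
    have : -1 ≤ σ*v := by rcases hσ with rfl | rfl <;> linarith
    rw [hy0]; linarith
  have hqS : (q:ℝ) ≤ S := by rw [hS]; nlinarith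
  have hY0 : 0 ≤ Y := by
    have h2 : -(S/2) ≤ d*q := by
      have := mul_nonneg (by linarith : (0:ℝ) ≤ d + 1/2) hq'.le
      linarith only [this, hqS]
    have h3 : -(1/2) ≤ d*q/S := by
      rw [le_div_iff₀ hSpos]; linarith only [h2]
    rw [hY]; linarith
  have key : (q:ℝ) * Y = p * X - 1/2 := by
    have e : (q:ℝ)*Y = q*y₀ + d*(q:ℝ)^2/S := by rw [hY]; ring
    have e2 : (p:ℝ)*X = p*x₀ - d*(p:ℝ)^2/S := by rw [hX]; ring
    have e3 : d*(q:ℝ)^2/S + d*(p:ℝ)^2/S = d := by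
      rw [← add_div, hS]
      field_simp
      ring
    linarith only [e, e2, e3, hline0]
  have hline : Y = ((p:ℝ)/q) * (X - 1/(2*(p:ℝ))) := by
    have e : ((p:ℝ)/q) * (X - 1/(2*(p:ℝ))) = (p*X - 1/2)/q := by
      field_simp
    rw [e, eq_div_iff hq'.ne']
    linear_combination key
  have hmem : pt (fold X) (fold Y) ∈ billiardOrbit (1/(2*(p:ℝ))) p q :=
    ⟨X, Y, hY0, hline, rfl⟩
  rw [Metric.mem_thickening_iff]
  refine ⟨pt (fold X) (fold Y), hmem, ?_⟩
  have hfx : fold x₀ = u := by rw [hx0]; exact fold_eval u ⟨hu0, hu1⟩ σ hσ m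
  have hfy : fold y₀ = v := by rw [hy0]; exact fold_eval v ⟨hv0, hv1⟩ σ hσ n
  have h1 : |u - fold X| ≤ |d| * p / S := by
    rw [← hfx]
    calc |fold x₀ - fold X| ≤ |x₀ - X| := fold_lip _ _
      _ ≤ |d| * p / S := by
          rw [hX, show x₀ - (x₀ - d*p/S) = d*p/S by ring, abs_div, abs_mul,
            abs_of_nonneg hp'.le, abs_of_nonneg hSpos.le]
  have h2 : |v - fold Y| ≤ |d| * q / S := by
    rw [← hfy]
    calc |fold y₀ - fold Y| ≤ |y₀ - Y| := fold_lip _ _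
      _ ≤ |d| * q / S := by
          rw [hY, show y₀ - (y₀ + d*q/S) = -(d*q/S) by ring, abs_neg, abs_div, abs_mul,
            abs_of_nonneg hq'.le, abs_of_nonneg hSpos.le]
  have hdist : dist z (pt (fold X) (fold Y)) ^ 2 ≤ d^2/S := by
    rw [EuclideanSpace.dist_eq, Real.sq_sqrt (by positivity), Fin.sum_univ_two]
    have e0 : (pt (fold X) (fold Y)) 0 = fold X := by simp [pt]
    have e1 : (pt (fold X) (fold Y)) 1 = fold Y := by simp [pt]
    rw [e0, e1, Real.dist_eq, Real.dist_eq, ← hu, ← hv]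
    have s1 : |u - fold X|^2 ≤ (|d| * p / S)^2 := pow_le_pow_left₀ (abs_nonneg _) h1 2
    have s2 : |v - fold Y|^2 ≤ (|d| * q / S)^2 := pow_le_pow_left₀ (abs_nonneg _) h2 2
    have e2 : (|d| * (p:ℝ) / S)^2 + (|d| * (q:ℝ) / S)^2 = d^2/S := by
      rw [hS, div_pow, div_pow, mul_pow, mul_pow, sq_abs]
      field_simp
    linarith
  have hr2 : d^2/S < r^2 := by
    have hb : 1 < S * (4*r^2) := by
      rw [hS]; exact (div_lt_iff₀ (by positivity)).mp hbig
    have hd2 : d^2 ≤ 1/4 := by nlinarith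
    rw [div_lt_iff₀ hSpos]; nlinarith
  exact lt_of_pow_lt_pow_left₀ 2 hr.le (lt_of_le_of_lt hdist hr2)
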